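/- Let g be a 6-dimensional nilpotent Lie algebra with a complex structure admitting a (1,0)-basis ω¹,ω²,ω³ with dω¹ = dω² = 0 and dω³ = ρω¹∧ω² + ω¹∧conj(ω¹) + λω¹∧conj(ω²) + Dω²∧conj(ω²), ρ ∈ {0,1}, λ ≥ 0, D = x+iy, and suppose λ ≠ ρ. Then g is 2-step nilpotent with b₁(g) ≥ 4, and: 4y² > (ρ−λ²)(4x+ρ−λ²) implies g ≅ h₂; 4y² = (ρ−λ²)(4x+ρ−λ²) implies g ≅ h₄; 4y² < (ρ−λ²)(4x+ρ−λ²) implies g ≅ h₅. -/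

import Mathlib

/-- `g ≅ h₂ = (0,0,0,0,12,34)`. -/
def IsH2 (g : Type) [LieRing g] [LieAlgebra ℝ g] : Prop :=
  ∃ b : Module.Basis (Fin 6) ℝ g, ⁅b 0, b 1⁆ = -b 4 ∧ ⁅b 2, b 3⁆ = -b 5 ∧
    ⁅b 0, b 2⁆ = 0 ∧ ⁅b 0, b 3⁆ = 0 ∧ ⁅b 0, b 4⁆ = 0 ∧ ⁅b 0, b 5⁆ = 0 ∧
    ⁅b 1, b 2⁆ = 0 ∧ ⁅b 1, b 3⁆ = 0 ∧ ⁅b 1, b 4⁆ = 0 ∧ ⁅b 1, b 5⁆ = 0 ∧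
    ⁅b 2, b 4⁆ = 0 ∧ ⁅b 2, b 5⁆ = 0 ∧ ⁅b 3, b 4⁆ = 0 ∧ ⁅b 3, b 5⁆ = 0 ∧
    ⁅b 4, b 5⁆ = 0

/-- `g ≅ h₄ = (0,0,0,0,12,14+23)`. -/
def IsH4 (g : Type) [LieRing g] [LieAlgebra ℝ g] : Prop :=
  ∃ b : Module.Basis (Fin 6) ℝ g, ⁅b 0, b 1⁆ = -b 4 ∧ ⁅b 0, b 3⁆ = -b 5 ∧
    ⁅b 1, b 2⁆ = -b 5 ∧
    ⁅b 0, b 2⁆ = 0 ∧ ⁅b 0, b 4⁆ = 0 ∧ ⁅b 0, b 5⁆ = 0 ∧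
    ⁅b 1, b 3⁆ = 0 ∧ ⁅b 1, b 4⁆ = 0 ∧ ⁅b 1, b 5⁆ = 0 ∧
    ⁅b 2, b 3⁆ = 0 ∧ ⁅b 2, b 4⁆ = 0 ∧ ⁅b 2, b 5⁆ = 0 ∧
    ⁅b 3, b 4⁆ = 0 ∧ ⁅b 3, b 5⁆ = 0 ∧ ⁅b 4, b 5⁆ = 0

/-- `g ≅ h₅ = (0,0,0,0,13+42,14+23)`. -/
def IsH5 (g : Type) [LieRing g] [LieAlgebra ℝ g] : Prop :=
  ∃ b : Module.Basis (Fin 6) ℝ g, ⁅b 0, b 2⁆ = -b 4 ∧ ⁅b 1, b 3⁆ = b 4 ∧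
    ⁅b 0, b 3⁆ = -b 5 ∧ ⁅b 1, b 2⁆ = -b 5 ∧
    ⁅b 0, b 1⁆ = 0 ∧ ⁅b 0, b 4⁆ = 0 ∧ ⁅b 0, b 5⁆ = 0 ∧
    ⁅b 1, b 4⁆ = 0 ∧ ⁅b 1, b 5⁆ = 0 ∧
    ⁅b 2, b 3⁆ = 0 ∧ ⁅b 2, b 4⁆ = 0 ∧ ⁅b 2, b 5⁆ = 0 ∧
    ⁅b 3, b 4⁆ = 0 ∧ ⁅b 3, b 5⁆ = 0 ∧ ⁅b 4, b 5⁆ = 0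


/-! ### Auxiliary infrastructure -/

lemma vec6_five {α : Type*} (a b c d e f : α) : ![a,b,c,d,e,f] 5 = f := rfl

noncomputable def bwdC : (Fin 6 → ℝ) →ₗ[ℝ] ℂ × ℂ × ℂ where
  toFun f := ((f 0 : ℂ) + (f 1 : ℂ) * Complex.I, (f 2 : ℂ) + (f 3 : ℂ) * Complex.I,
    (f 4 : ℂ) + (f 5 : ℂ) * Complex.I)
  map_add' a b := by
    refine Prod.ext ?_ (Prod.ext ?_ ?_) <;> simp <;> push_cast <;> ring
  map_smul' r a := by
    refine Prod.ext ?_ (Prod.ext ?_ ?_) <;> simp [Complex.real_smul] <;> push_cast <;> ring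

noncomputable def fwdC : (ℂ × ℂ × ℂ) →ₗ[ℝ] (Fin 6 → ℝ) where
  toFun z := ![z.1.re, z.1.im, z.2.1.re, z.2.1.im, z.2.2.re, z.2.2.im]
  map_add' a b := by
    funext i
    fin_cases i <;> simp [vec6_five]
  map_smul' r a := by
    funext i
    fin_cases i <;> simp [vec6_five, Complex.real_smul]

noncomputable def psiC : (ℂ × ℂ × ℂ) ≃ₗ[ℝ] (Fin 6 → ℝ) :=
  LinearEquiv.ofLinear fwdC bwdC
    (by
      apply LinearMap.ext; intro f
      funext i
      fin_cases i <;> simp [fwdC, bwdC, vec6_five])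
    (by
      apply LinearMap.ext; intro z
      refine Prod.ext ?_ (Prod.ext ?_ ?_) <;> simp [fwdC, bwdC, vec6_five, Complex.re_add_im])

lemma buildBasis {g : Type} [AddCommGroup g] [Module ℝ g] (E : Module.Basis (Fin 6) ℝ g)
    (v : Fin 6 → g) (C : Fin 6 → Fin 6 → ℝ)
    (h : ∀ i, ∑ j, C i j • v j = E i) : ∃ b : Module.Basis (Fin 6) ℝ g, ∀ i, b i = v i := by
  have : Module.Finite ℝ g := Module.Finite.of_basis E
  set T := E.constr ℝ v with hT
  set S := E.constr ℝ (fun i => ∑ j, C i j • E j) with hS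
  have hTS : T ∘ₗ S = LinearMap.id := by
    apply E.ext; intro i
    simp only [LinearMap.comp_apply, hS, Module.Basis.constr_basis, map_sum, map_smul, hT,
      LinearMap.id_apply]
    exact h i
  have hST : S ∘ₗ T = LinearMap.id := (LinearMap.comp_eq_id_comm ℝ g).mp hTS
  refine ⟨E.map (LinearEquiv.ofLinear T S hTS hST), fun i => ?_⟩
  simp [Module.Basis.map_apply, LinearEquiv.ofLinear_apply, hT]

lemma buildBasis6 {g : Type} [AddCommGroup g] [Module ℝ g] (E : Module.Basis (Fin 6) ℝ g)
    (v0 v1 v2 v3 v4 v5 : g)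
    (c00 c01 c02 c03 c04 c05 c10 c11 c12 c13 c14 c15
     c20 c21 c22 c23 c24 c25 c30 c31 c32 c33 c34 c35
     c40 c41 c42 c43 c44 c45 c50 c51 c52 c53 c54 c55 : ℝ)
    (h0 : c00 • v0 + c01 • v1 + c02 • v2 + c03 • v3 + c04 • v4 + c05 • v5 = E 0)
    (h1 : c10 • v0 + c11 • v1 + c12 • v2 + c13 • v3 + c14 • v4 + c15 • v5 = E 1)
    (h2 : c20 • v0 + c21 • v1 + c22 • v2 + c23 • v3 + c24 • v4 + c25 • v5 = E 2)
    (h3 : c30 • v0 + c31 • v1 + c32 • v2 + c33 • v3 + c34 • v4 + c35 • v5 = E 3)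
    (h4 : c40 • v0 + c41 • v1 + c42 • v2 + c43 • v3 + c44 • v4 + c45 • v5 = E 4)
    (h5 : c50 • v0 + c51 • v1 + c52 • v2 + c53 • v3 + c54 • v4 + c55 • v5 = E 5) :
    ∃ b : Module.Basis (Fin 6) ℝ g,
      b 0 = v0 ∧ b 1 = v1 ∧ b 2 = v2 ∧ b 3 = v3 ∧ b 4 = v4 ∧ b 5 = v5 := by
  obtain ⟨b, hb⟩ := buildBasis E ![v0,v1,v2,v3,v4,v5]
    ![![c00,c01,c02,c03,c04,c05],![c10,c11,c12,c13,c14,c15],![c20,c21,c22,c23,c24,c25],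
      ![c30,c31,c32,c33,c34,c35],![c40,c41,c42,c43,c44,c45],![c50,c51,c52,c53,c54,c55]]
    (by intro i; fin_cases i <;> rw [Fin.sum_univ_six] <;>
          [exact h0; exact h1; exact h2; exact h3; exact h4; exact h5])
  exact ⟨b, hb 0, hb 1, hb 2, hb 3, hb 4, hb 5⟩

set_option maxHeartbeats 1000000 in
lemma mkH4 {g : Type} [LieRing g] [LieAlgebra ℝ g] (E : Module.Basis (Fin 6) ℝ g) (μ ν t : ℝ)
    (hμ : μ ≠ 0) (hν : ν ≠ 0)
    (T01 : ⁅E 0, E 1⁆ = (2:ℝ) • E 5)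
    (T02 : ⁅E 0, E 2⁆ = (-μ) • E 4)
    (T03 : ⁅E 0, E 3⁆ = ν • E 5)
    (T12 : ⁅E 1, E 2⁆ = (-μ) • E 5)
    (T13 : ⁅E 1, E 3⁆ = (-ν) • E 4)
    (T23 : ⁅E 2, E 3⁆ = (μ*ν*t) • E 4 + (μ*ν*(1-t^2)/2) • E 5)
    (Tc4 : ∀ X : g, ⁅X, E 4⁆ = 0) (Tc5 : ∀ X : g, ⁅X, E 5⁆ = 0) :
    IsH4 g := by
  have T10 : ⁅E 1, E 0⁆ = -((2:ℝ) • E 5) := by rw [← lie_skew, T01]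
  have T20 : ⁅E 2, E 0⁆ = -((-μ) • E 4) := by rw [← lie_skew, T02]
  have T30 : ⁅E 3, E 0⁆ = -(ν • E 5) := by rw [← lie_skew, T03]
  have T21 : ⁅E 2, E 1⁆ = -((-μ) • E 5) := by rw [← lie_skew, T12]
  have T31 : ⁅E 3, E 1⁆ = -((-ν) • E 4) := by rw [← lie_skew, T13]
  have T32 : ⁅E 3, E 2⁆ = -((μ*ν*t) • E 4 + (μ*ν*(1-t^2)/2) • E 5) := by rw [← lie_skew, T23]
  have Td4 : ∀ X : g, ⁅E 4, X⁆ = 0 := fun X => by rw [← lie_skew, Tc4, neg_zero]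
  have Td5 : ∀ X : g, ⁅E 5, X⁆ = 0 := fun X => by rw [← lie_skew, Tc5, neg_zero]
  obtain ⟨b, hb0, hb1, hb2, hb3, hb4, hb5⟩ := buildBasis6 E
    (((-ν : ℝ)) • E 0)
    (((μ : ℝ)) • E 1)
    (((-(t*ν) : ℝ)) • E 0 + ((-ν : ℝ)) • E 1 + ((2 : ℝ)) • E 3)
    (((μ : ℝ)) • E 0 + ((-(t*μ) : ℝ)) • E 1 + ((-2 : ℝ)) • E 2)
    (((2*ν*μ : ℝ)) • E 5)
    (((2*ν*μ : ℝ)) • E 4 + ((-(2*t*ν*μ) : ℝ)) • E 5)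
    ((-1/ν : ℝ)) ((0 : ℝ)) ((0 : ℝ)) ((0 : ℝ)) ((0 : ℝ)) ((0 : ℝ))
    ((0 : ℝ)) ((1/μ : ℝ)) ((0 : ℝ)) ((0 : ℝ)) ((0 : ℝ)) ((0 : ℝ))
    ((-μ/(2*ν) : ℝ)) ((-t/2 : ℝ)) ((0 : ℝ)) ((-1/2 : ℝ)) ((0 : ℝ)) ((0 : ℝ))
    ((-t/2 : ℝ)) ((ν/(2*μ) : ℝ)) ((1/2 : ℝ)) ((0 : ℝ)) ((0 : ℝ)) ((0 : ℝ))
    ((0 : ℝ)) ((0 : ℝ)) ((0 : ℝ)) ((0 : ℝ)) ((t/(2*ν*μ) : ℝ)) ((1/(2*ν*μ) : ℝ))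
    ((0 : ℝ)) ((0 : ℝ)) ((0 : ℝ)) ((0 : ℝ)) ((1/(2*ν*μ) : ℝ)) ((0 : ℝ))
    (by match_scalars <;> (try field_simp) <;> (try ring))
    (by match_scalars <;> (try field_simp) <;> (try ring))
    (by match_scalars <;> (try field_simp) <;> (try ring))
    (by match_scalars <;> (try field_simp) <;> (try ring))
    (by match_scalars <;> (try field_simp) <;> (try ring))
    (by match_scalars <;> (try field_simp) <;> (try ring))
  refine ⟨b, ?_, ?_, ?_, ?_, ?_, ?_, ?_, ?_, ?_, ?_, ?_, ?_, ?_, ?_, ?_⟩ <;>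
    simp only [hb0, hb1, hb2, hb3, hb4, hb5] <;>
    simp only [lie_add, add_lie, lie_smul, smul_lie, lie_self, T01, T02, T03, T12, T13, T23,
      T10, T20, T30, T21, T31, T32, Tc4, Tc5, Td4, Td5, smul_zero, zero_add, add_zero,
      smul_neg, smul_smul, smul_add, neg_zero] <;>
    try (match_scalars <;> ring)

set_option maxHeartbeats 1000000 in
lemma mkH2 {g : Type} [LieRing g] [LieAlgebra ℝ g] (E : Module.Basis (Fin 6) ℝ g) (μ ν t1 t2 : ℝ)
    (hμ : μ ≠ 0) (hν : ν ≠ 0) (hdt : t1 - t2 ≠ 0)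
    (T01 : ⁅E 0, E 1⁆ = (2:ℝ) • E 5)
    (T02 : ⁅E 0, E 2⁆ = (-μ) • E 4)
    (T03 : ⁅E 0, E 3⁆ = ν • E 5)
    (T12 : ⁅E 1, E 2⁆ = (-μ) • E 5)
    (T13 : ⁅E 1, E 3⁆ = (-ν) • E 4)
    (T23 : ⁅E 2, E 3⁆ = (μ*ν*(t1+t2)/2) • E 4 + (μ*ν*(1-t1*t2)/2) • E 5)
    (Tc4 : ∀ X : g, ⁅X, E 4⁆ = 0) (Tc5 : ∀ X : g, ⁅X, E 5⁆ = 0) :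
    IsH2 g := by
  have T10 : ⁅E 1, E 0⁆ = -((2:ℝ) • E 5) := by rw [← lie_skew, T01]
  have T20 : ⁅E 2, E 0⁆ = -((-μ) • E 4) := by rw [← lie_skew, T02]
  have T30 : ⁅E 3, E 0⁆ = -(ν • E 5) := by rw [← lie_skew, T03]
  have T21 : ⁅E 2, E 1⁆ = -((-μ) • E 5) := by rw [← lie_skew, T12]
  have T31 : ⁅E 3, E 1⁆ = -((-ν) • E 4) := by rw [← lie_skew, T13]
  have T32 : ⁅E 3, E 2⁆ = -((μ*ν*(t1+t2)/2) • E 4 + (μ*ν*(1-t1*t2)/2) • E 5) := by rw [← lie_skew, T23]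
  have Td4 : ∀ X : g, ⁅E 4, X⁆ = 0 := fun X => by rw [← lie_skew, Tc4, neg_zero]
  have Td5 : ∀ X : g, ⁅E 5, X⁆ = 0 := fun X => by rw [← lie_skew, Tc5, neg_zero]
  obtain ⟨b, hb0, hb1, hb2, hb3, hb4, hb5⟩ := buildBasis6 E
    (((t2*ν : ℝ)) • E 0 + ((ν : ℝ)) • E 1 + ((-2 : ℝ)) • E 3)
    (((μ : ℝ)) • E 0 + ((-(t2*μ) : ℝ)) • E 1 + ((-2 : ℝ)) • E 2)
    (((-(t1*ν) : ℝ)) • E 0 + ((-ν : ℝ)) • E 1 + ((2 : ℝ)) • E 3)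
    (((-μ : ℝ)) • E 0 + ((t1*μ : ℝ)) • E 1 + ((2 : ℝ)) • E 2)
    (((2*(t1-t2)*ν*μ : ℝ)) • E 4 + ((-(2*(t1-t2)*ν*μ*t2) : ℝ)) • E 5)
    (((-(2*(t1-t2)*ν*μ) : ℝ)) • E 4 + ((2*(t1-t2)*ν*μ*t1 : ℝ)) • E 5)
    ((-1/((t1-t2)*ν) : ℝ)) ((0 : ℝ)) ((-1/((t1-t2)*ν) : ℝ)) ((0 : ℝ)) ((0 : ℝ)) ((0 : ℝ))
    ((0 : ℝ)) ((1/((t1-t2)*μ) : ℝ)) ((0 : ℝ)) ((1/((t1-t2)*μ) : ℝ)) ((0 : ℝ)) ((0 : ℝ))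
    ((-μ/(2*(t1-t2)*ν) : ℝ)) ((-t1/(2*(t1-t2)) : ℝ)) ((-μ/(2*(t1-t2)*ν) : ℝ)) ((-t2/(2*(t1-t2)) : ℝ)) ((0 : ℝ)) ((0 : ℝ))
    ((-t1/(2*(t1-t2)) : ℝ)) ((ν/(2*(t1-t2)*μ) : ℝ)) ((-t2/(2*(t1-t2)) : ℝ)) ((ν/(2*(t1-t2)*μ) : ℝ)) ((0 : ℝ)) ((0 : ℝ))
    ((0 : ℝ)) ((0 : ℝ)) ((0 : ℝ)) ((0 : ℝ)) ((t1/(2*(t1-t2)^2*ν*μ) : ℝ)) ((t2/(2*(t1-t2)^2*ν*μ) : ℝ))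
    ((0 : ℝ)) ((0 : ℝ)) ((0 : ℝ)) ((0 : ℝ)) ((1/(2*(t1-t2)^2*ν*μ) : ℝ)) ((1/(2*(t1-t2)^2*ν*μ) : ℝ))
    (by match_scalars <;> (try field_simp) <;> (try ring))
    (by match_scalars <;> (try field_simp) <;> (try ring))
    (by match_scalars <;> (try field_simp) <;> (try ring))
    (by match_scalars <;> (try field_simp) <;> (try ring))
    (by match_scalars <;> (try field_simp) <;> (try ring))
    (by match_scalars <;> (try field_simp) <;> (try ring))
  refine ⟨b, ?_, ?_, ?_, ?_, ?_, ?_, ?_, ?_, ?_, ?_, ?_, ?_, ?_, ?_, ?_⟩ <;>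
    simp only [hb0, hb1, hb2, hb3, hb4, hb5] <;>
    simp only [lie_add, add_lie, lie_smul, smul_lie, lie_self, T01, T02, T03, T12, T13, T23,
      T10, T20, T30, T21, T31, T32, Tc4, Tc5, Td4, Td5, smul_zero, zero_add, add_zero,
      smul_neg, smul_smul, smul_add, neg_zero] <;>
    try (match_scalars <;> ring)

set_option maxHeartbeats 1000000 in
lemma mkH5 {g : Type} [LieRing g] [LieAlgebra ℝ g] (E : Module.Basis (Fin 6) ℝ g) (μ ν p q : ℝ)
    (hμ : μ ≠ 0) (hν : ν ≠ 0) (hq : q ≠ 0)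
    (T01 : ⁅E 0, E 1⁆ = (2:ℝ) • E 5)
    (T02 : ⁅E 0, E 2⁆ = (-μ) • E 4)
    (T03 : ⁅E 0, E 3⁆ = ν • E 5)
    (T12 : ⁅E 1, E 2⁆ = (-μ) • E 5)
    (T13 : ⁅E 1, E 3⁆ = (-ν) • E 4)
    (T23 : ⁅E 2, E 3⁆ = (μ*ν*p) • E 4 + (μ*ν*(1-p^2-q^2)/2) • E 5)
    (Tc4 : ∀ X : g, ⁅X, E 4⁆ = 0) (Tc5 : ∀ X : g, ⁅X, E 5⁆ = 0) :
    IsH5 g := by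
  have T10 : ⁅E 1, E 0⁆ = -((2:ℝ) • E 5) := by rw [← lie_skew, T01]
  have T20 : ⁅E 2, E 0⁆ = -((-μ) • E 4) := by rw [← lie_skew, T02]
  have T30 : ⁅E 3, E 0⁆ = -(ν • E 5) := by rw [← lie_skew, T03]
  have T21 : ⁅E 2, E 1⁆ = -((-μ) • E 5) := by rw [← lie_skew, T12]
  have T31 : ⁅E 3, E 1⁆ = -((-ν) • E 4) := by rw [← lie_skew, T13]
  have T32 : ⁅E 3, E 2⁆ = -((μ*ν*p) • E 4 + (μ*ν*(1-p^2-q^2)/2) • E 5) := by rw [← lie_skew, T23]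
  have Td4 : ∀ X : g, ⁅E 4, X⁆ = 0 := fun X => by rw [← lie_skew, Tc4, neg_zero]
  have Td5 : ∀ X : g, ⁅E 5, X⁆ = 0 := fun X => by rw [← lie_skew, Tc5, neg_zero]
  obtain ⟨b, hb0, hb1, hb2, hb3, hb4, hb5⟩ := buildBasis6 E
    (((-(q*ν*μ) : ℝ)) • E 0)
    (((p*ν*μ : ℝ)) • E 0 + ((ν*μ : ℝ)) • E 1 + ((-(2*μ) : ℝ)) • E 3)
    (((2*q*ν*μ : ℝ)) • E 1)
    (((2*ν*μ : ℝ)) • E 0 + ((-(2*p*ν*μ) : ℝ)) • E 1 + ((-(4*ν) : ℝ)) • E 2)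
    (((4*q^2*ν^2*μ^2 : ℝ)) • E 5)
    (((4*q*ν^2*μ^2 : ℝ)) • E 4 + ((-(4*p*q*ν^2*μ^2) : ℝ)) • E 5)
    ((-2/(2*q*ν*μ) : ℝ)) ((0 : ℝ)) ((0 : ℝ)) ((0 : ℝ)) ((0 : ℝ)) ((0 : ℝ))
    ((0 : ℝ)) ((0 : ℝ)) ((1/(2*q*ν*μ) : ℝ)) ((0 : ℝ)) ((0 : ℝ)) ((0 : ℝ))
    ((-μ/(2*q*ν*μ) : ℝ)) ((0 : ℝ)) ((-(p*μ)/(2*(2*q*ν*μ)) : ℝ)) ((-(q*μ)/(2*(2*q*ν*μ)) : ℝ)) ((0 : ℝ)) ((0 : ℝ))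
    ((-(p*ν)/(2*q*ν*μ) : ℝ)) ((-(q*ν)/(2*q*ν*μ) : ℝ)) ((ν/(2*(2*q*ν*μ)) : ℝ)) ((0 : ℝ)) ((0 : ℝ)) ((0 : ℝ))
    ((0 : ℝ)) ((0 : ℝ)) ((0 : ℝ)) ((0 : ℝ)) ((p/(2*q*ν*μ)^2 : ℝ)) ((q/(2*q*ν*μ)^2 : ℝ))
    ((0 : ℝ)) ((0 : ℝ)) ((0 : ℝ)) ((0 : ℝ)) ((1/(2*q*ν*μ)^2 : ℝ)) ((0 : ℝ))
    (by match_scalars <;> (try field_simp) <;> (try ring))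
    (by match_scalars <;> (try field_simp) <;> (try ring))
    (by match_scalars <;> (try field_simp) <;> (try ring))
    (by match_scalars <;> (try field_simp) <;> (try ring))
    (by match_scalars <;> (try field_simp) <;> (try ring))
    (by match_scalars <;> (try field_simp) <;> (try ring))
  refine ⟨b, ?_, ?_, ?_, ?_, ?_, ?_, ?_, ?_, ?_, ?_, ?_, ?_, ?_, ?_, ?_⟩ <;>
    simp only [hb0, hb1, hb2, hb3, hb4, hb5] <;>
    simp only [lie_add, add_lie, lie_smul, smul_lie, lie_self, T01, T02, T03, T12, T13, T23,
      T10, T20, T30, T21, T31, T32, Tc4, Tc5, Td4, Td5, smul_zero, zero_add, add_zero,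
      smul_neg, smul_smul, smul_add, neg_zero] <;>
    try (match_scalars <;> ring)


set_option maxHeartbeats 2000000 in
/-- Proposition 2.4(ii): classification of the Lie algebra underlying the
complex structure equations `dω¹ = dω² = 0`,
`dω³ = ρ ω¹∧ω² + ω¹∧ω̄¹ + λ ω¹∧ω̄² + D ω²∧ω̄²` in the case `λ ≠ ρ`; the
algebra is 2-step nilpotent with first Betti number `≥ 4`. -/
theorem stmt19 (g : Type) [LieRing g] [LieAlgebra ℝ g]
    (J : g →ₗ[ℝ] g) (hJ : ∀ X, J (J X) = -X)
    (ω₁ ω₂ ω₃ : g →ₗ[ℝ] ℂ)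
    (h1 : ∀ X, ω₁ (J X) = Complex.I * ω₁ X)
    (h2 : ∀ X, ω₂ (J X) = Complex.I * ω₂ X)
    (h3 : ∀ X, ω₃ (J X) = Complex.I * ω₃ X)
    (hcoord : Function.Bijective (fun X : g => (ω₁ X, ω₂ X, ω₃ X)))
    (ρ lam : ℝ) (hρ : ρ = 0 ∨ ρ = 1) (hlam : 0 ≤ lam)
    (D : ℂ) (x y : ℝ) (hx : D.re = x) (hy : D.im = y)
    (hlamρ : lam ≠ ρ)
    (hd1 : ∀ X Y : g, ω₁ ⁅X, Y⁆ = 0)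
    (hd2 : ∀ X Y : g, ω₂ ⁅X, Y⁆ = 0)
    (hd3 : ∀ X Y : g, -ω₃ ⁅X, Y⁆ =
      (ρ : ℂ) * (ω₁ X * ω₂ Y - ω₁ Y * ω₂ X)
        + (ω₁ X * (starRingEnd ℂ) (ω₁ Y) - ω₁ Y * (starRingEnd ℂ) (ω₁ X))
        + (lam : ℂ) * (ω₁ X * (starRingEnd ℂ) (ω₂ Y) - ω₁ Y * (starRingEnd ℂ) (ω₂ X))
        + D * (ω₂ X * (starRingEnd ℂ) (ω₂ Y) - ω₂ Y * (starRingEnd ℂ) (ω₂ X))) :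
    (LieModule.lowerCentralSeries ℝ g g 2 = ⊥ ∧
      LieModule.lowerCentralSeries ℝ g g 1 ≠ ⊥) ∧
    (Module.finrank ℝ g -
        Module.finrank ℝ ↥(LieModule.lowerCentralSeries ℝ g g 1) ≥ 4) ∧
    (4 * y ^ 2 > (ρ - lam ^ 2) * (4 * x + ρ - lam ^ 2) → IsH2 g) ∧
    (4 * y ^ 2 = (ρ - lam ^ 2) * (4 * x + ρ - lam ^ 2) → IsH4 g) ∧
    (4 * y ^ 2 < (ρ - lam ^ 2) * (4 * x + ρ - lam ^ 2) → IsH5 g) := by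
  classical
  -- the coordinate equivalence
  let φL : g →ₗ[ℝ] ℂ × ℂ × ℂ :=
    { toFun := fun X => (ω₁ X, ω₂ X, ω₃ X)
      map_add' := fun X Y => by simp [Prod.ext_iff]
      map_smul' := fun r X => by simp [Prod.ext_iff] }
  let F : g ≃ₗ[ℝ] ℂ × ℂ × ℂ := LinearEquiv.ofBijective φL hcoord
  have hFdef : ∀ X : g, F X = (ω₁ X, ω₂ X, ω₃ X) := fun X => rfl
  let E : Module.Basis (Fin 6) ℝ g := Module.Basis.ofEquivFun (F.trans psiC)
  have hE : ∀ i, F (E i) = bwdC (Pi.single i 1) := by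
    intro i
    have h1 : E i = (F.trans psiC).symm (Pi.single i 1) := by
      simp [E, Module.Basis.coe_ofEquivFun]
    rw [h1]
    calc F ((F.trans psiC).symm (Pi.single i 1))
        = F (F.symm (psiC.symm (Pi.single i 1))) := rfl
      _ = psiC.symm (Pi.single i 1) := F.apply_symm_apply _
      _ = bwdC (Pi.single i 1) := rfl
  have hc0 : F (E 0) = ((1 : ℂ), 0, 0) := by
    rw [hE]; simp [bwdC, Pi.single_apply, Prod.ext_iff]
  have hc1 : F (E 1) = (Complex.I, 0, 0) := by
    rw [hE]; simp [bwdC, Pi.single_apply, Prod.ext_iff]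
  have hc2 : F (E 2) = (0, (1 : ℂ), 0) := by
    rw [hE]; simp [bwdC, Pi.single_apply, Prod.ext_iff]
  have hc3 : F (E 3) = (0, Complex.I, 0) := by
    rw [hE]; simp [bwdC, Pi.single_apply, Prod.ext_iff]
  have hc4 : F (E 4) = (0, 0, (1 : ℂ)) := by
    rw [hE]; simp [bwdC, Pi.single_apply, Prod.ext_iff]
  have hc5 : F (E 5) = (0, 0, Complex.I) := by
    rw [hE]; simp [bwdC, Pi.single_apply, Prod.ext_iff]
  -- values of the forms on the basis
  have o1 : ∀ V : g, ω₁ V = (F V).1 := fun _ => rfl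
  have o2 : ∀ V : g, ω₂ V = (F V).2.1 := fun _ => rfl
  have o3 : ∀ V : g, ω₃ V = (F V).2.2 := fun _ => rfl
  have w10 : ω₁ (E 0) = 1 := by rw [o1, hc0]
  have w11 : ω₁ (E 1) = Complex.I := by rw [o1, hc1]
  have w12 : ω₁ (E 2) = 0 := by rw [o1, hc2]
  have w13 : ω₁ (E 3) = 0 := by rw [o1, hc3]
  have w14 : ω₁ (E 4) = 0 := by rw [o1, hc4]
  have w15 : ω₁ (E 5) = 0 := by rw [o1, hc5]
  have w20 : ω₂ (E 0) = 0 := by rw [o2, hc0]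
  have w21 : ω₂ (E 1) = 0 := by rw [o2, hc1]
  have w22 : ω₂ (E 2) = 1 := by rw [o2, hc2]
  have w23 : ω₂ (E 3) = Complex.I := by rw [o2, hc3]
  have w24 : ω₂ (E 4) = 0 := by rw [o2, hc4]
  have w25 : ω₂ (E 5) = 0 := by rw [o2, hc5]
  -- image of brackets
  have hbrF : ∀ X Y : g, F ⁅X, Y⁆ = (0, 0, ω₃ ⁅X, Y⁆) := by
    intro X Y
    rw [hFdef, hd1, hd2]
  -- the master formula
  have master : ∀ X Y : g, ⁅X, Y⁆ = (ω₃ ⁅X, Y⁆).re • E 4 + (ω₃ ⁅X, Y⁆).im • E 5 := by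
    intro X Y
    apply F.injective
    rw [map_add, map_smul, map_smul, hc4, hc5, hbrF]
    refine Prod.ext ?_ (Prod.ext ?_ ?_) <;>
      simp [Complex.real_smul, Complex.re_add_im]
  -- centrality
  have hcent : ∀ X W : g, ω₁ W = 0 → ω₂ W = 0 → ⁅X, W⁆ = 0 := by
    intro X W h1w h2w
    apply F.injective
    rw [hbrF, map_zero]
    have h3 := hd3 X W
    rw [h1w, h2w] at h3
    simp only [map_zero, mul_zero, zero_mul, sub_zero, zero_sub, add_zero, mul_neg,
      neg_zero, neg_eq_zero, sub_self] at h3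
    simp [Prod.ext_iff, h3]
  have Tc4 : ∀ X : g, ⁅X, E 4⁆ = 0 := fun X => hcent X (E 4) w14 w24
  have Tc5 : ∀ X : g, ⁅X, E 5⁆ = 0 := fun X => hcent X (E 5) w15 w25
  have hD : D = (x : ℂ) + (y : ℂ) * Complex.I := by
    rw [← hx, ← hy]; exact (Complex.re_add_im D).symm
  -- the bracket table
  have hv01 : ω₃ ⁅E 0, E 1⁆ = 2 * Complex.I := by
    have h3 := hd3 (E 0) (E 1)
    rw [w10, w11, w20, w21] at h3
    simp only [map_zero, map_one, Complex.conj_I, mul_zero, zero_mul, mul_one, one_mul,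
      sub_zero, zero_sub, sub_self, add_zero, zero_add, mul_neg, neg_neg, neg_zero] at h3
    linear_combination -h3
  have hv02 : ω₃ ⁅E 0, E 2⁆ = -(ρ : ℂ) - (lam : ℂ) := by
    have h3 := hd3 (E 0) (E 2)
    rw [w10, w12, w20, w22] at h3
    simp only [map_zero, map_one, Complex.conj_I, mul_zero, zero_mul, mul_one, one_mul,
      sub_zero, zero_sub, sub_self, add_zero, zero_add, mul_neg, neg_neg, neg_zero] at h3
    linear_combination -h3
  have hv03 : ω₃ ⁅E 0, E 3⁆ = ((lam : ℂ) - (ρ : ℂ)) * Complex.I := by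
    have h3 := hd3 (E 0) (E 3)
    rw [w10, w13, w20, w23] at h3
    simp only [map_zero, map_one, Complex.conj_I, mul_zero, zero_mul, mul_one, one_mul,
      sub_zero, zero_sub, sub_self, add_zero, zero_add, mul_neg, neg_neg, neg_zero] at h3
    linear_combination -h3
  have hv12 : ω₃ ⁅E 1, E 2⁆ = (-(ρ : ℂ) - (lam : ℂ)) * Complex.I := by
    have h3 := hd3 (E 1) (E 2)
    rw [w11, w12, w21, w22] at h3
    simp only [map_zero, map_one, Complex.conj_I, mul_zero, zero_mul, mul_one, one_mul,
      sub_zero, zero_sub, sub_self, add_zero, zero_add, mul_neg, neg_neg, neg_zero] at h3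
    linear_combination -h3
  have hv13 : ω₃ ⁅E 1, E 3⁆ = (ρ : ℂ) - (lam : ℂ) := by
    have h3 := hd3 (E 1) (E 3)
    rw [w11, w13, w21, w23] at h3
    simp only [map_zero, map_one, Complex.conj_I, Complex.I_mul_I, mul_zero, zero_mul,
      mul_one, one_mul, sub_zero, zero_sub, sub_self, add_zero, zero_add, mul_neg,
      neg_neg, neg_zero] at h3
    linear_combination -h3
  have hv23 : ω₃ ⁅E 2, E 3⁆ = -(2 * (y : ℂ)) + 2 * (x : ℂ) * Complex.I := by
    have h3 := hd3 (E 2) (E 3)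
    rw [w12, w13, w22, w23, hD] at h3
    simp only [map_zero, map_one, Complex.conj_I, mul_zero, zero_mul, mul_one, one_mul,
      sub_zero, zero_sub, sub_self, add_zero, zero_add, mul_neg, neg_neg, neg_zero] at h3
    linear_combination -h3 + 2 * (y:ℝ) * Complex.I_sq
  -- table in real form
  have T01 : ⁅E 0, E 1⁆ = ((2 : ℝ)) • E 5 := by
    rw [master (E 0) (E 1), hv01]
    match_scalars <;> (try simp) <;> (try ring)
  have T02 : ⁅E 0, E 2⁆ = ((-(ρ + lam) : ℝ)) • E 4 := by
    rw [master (E 0) (E 2), hv02]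
    match_scalars <;> (try simp) <;> (try ring)
  have T03 : ⁅E 0, E 3⁆ = (((lam - ρ) : ℝ)) • E 5 := by
    rw [master (E 0) (E 3), hv03]
    match_scalars <;> (try simp) <;> (try ring)
  have T12 : ⁅E 1, E 2⁆ = ((-(ρ + lam) : ℝ)) • E 5 := by
    rw [master (E 1) (E 2), hv12]
    match_scalars <;> (try simp) <;> (try ring)
  have T13 : ⁅E 1, E 3⁆ = ((-(lam - ρ) : ℝ)) • E 4 := by
    rw [master (E 1) (E 3), hv13]
    match_scalars <;> (try simp) <;> (try ring)
  have T23 : ⁅E 2, E 3⁆ = ((-(2*y) : ℝ)) • E 4 + (((2*x) : ℝ)) • E 5 := by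
    rw [master (E 2) (E 3), hv23]
    match_scalars <;> (try simp) <;> (try ring)
  -- nonvanishing parameters
  have hμ : ρ + lam ≠ 0 := by
    rcases hρ with h | h
    · subst h; simpa using hlamρ
    · subst h; intro hc; linarith
  have hν : lam - ρ ≠ 0 := sub_ne_zero_of_ne hlamρ
  have hP : ((ρ+lam)*(lam-ρ)) ≠ 0 := mul_ne_zero hμ hν
  have hident : (ρ - lam ^ 2) * (4 * x + ρ - lam ^ 2) =
      ((ρ+lam)*(lam-ρ))^2 - 4*x*((ρ+lam)*(lam-ρ)) := by
    rcases hρ with h | h <;> subst h <;> ring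
  -- part (i)
  have hne : LieModule.lowerCentralSeries ℝ g g 1 ≠ ⊥ := by
    intro hbot
    have hmem : ⁅E 0, E 1⁆ ∈ LieModule.lowerCentralSeries ℝ g g 1 := by
      rw [show (1 : ℕ) = 0 + 1 from rfl, LieModule.lowerCentralSeries_succ]
      exact LieSubmodule.lie_mem_lie (LieSubmodule.mem_top _)
        (by rw [LieModule.lowerCentralSeries_zero]; exact LieSubmodule.mem_top _)
    rw [hbot, LieSubmodule.mem_bot, T01] at hmem
    have : E 5 ≠ 0 := E.ne_zero 5
    have h2 : (2 : ℝ) ≠ 0 := two_ne_zero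
    rcases smul_eq_zero.mp hmem with h | h
    · exact h2 h
    · exact this h
  have hsub1 : ∀ m ∈ LieModule.lowerCentralSeries ℝ g g 1, ω₁ m = 0 ∧ ω₂ m = 0 := by
    have hle : (LieModule.lowerCentralSeries ℝ g g 1 : LieSubmodule ℝ g g).toSubmodule ≤
        LinearMap.ker ω₁ ⊓ LinearMap.ker ω₂ := by
      rw [show (1 : ℕ) = 0 + 1 from rfl, LieModule.lowerCentralSeries_succ,
        LieModule.lowerCentralSeries_zero, LieSubmodule.lieIdeal_oper_eq_linear_span']
      apply Submodule.span_le.mpr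
      rintro _ ⟨X, -, Y, -, rfl⟩
      exact Submodule.mem_inf.mpr ⟨LinearMap.mem_ker.mpr (hd1 X Y),
        LinearMap.mem_ker.mpr (hd2 X Y)⟩
    intro m hm
    have := hle hm
    rw [Submodule.mem_inf, LinearMap.mem_ker, LinearMap.mem_ker] at this
    exact this
  have hlcs2 : LieModule.lowerCentralSeries ℝ g g 2 = ⊥ := by
    rw [show (2 : ℕ) = 1 + 1 from rfl, LieModule.lowerCentralSeries_succ,
      LieSubmodule.lie_eq_bot_iff]
    intro X _ m hm
    obtain ⟨h1m, h2m⟩ := hsub1 m hm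
    exact hcent X m h1m h2m
  -- part (ii) : Betti number
  have finst : FiniteDimensional ℝ g := Module.Finite.of_basis E
  have h6 : Module.finrank ℝ g = 6 := by
    rw [Module.finrank_eq_card_basis E, Fintype.card_fin]
  have hrank2 : Module.finrank ℝ ↥(LieModule.lowerCentralSeries ℝ g g 1) ≤ 2 := by
    have hle : (LieModule.lowerCentralSeries ℝ g g 1 : LieSubmodule ℝ g g).toSubmodule ≤
        Submodule.span ℝ {E 4, E 5} := by
      rw [show (1 : ℕ) = 0 + 1 from rfl, LieModule.lowerCentralSeries_succ,
        LieModule.lowerCentralSeries_zero, LieSubmodule.lieIdeal_oper_eq_linear_span']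
      apply Submodule.span_le.mpr
      rintro _ ⟨X, -, Y, -, rfl⟩
      rw [master X Y]
      exact Submodule.add_mem _
        (Submodule.smul_mem _ _ (Submodule.subset_span (by simp)))
        (Submodule.smul_mem _ _ (Submodule.subset_span (by simp)))
    calc Module.finrank ℝ ↥(LieModule.lowerCentralSeries ℝ g g 1)
        ≤ Module.finrank ℝ ↥(Submodule.span ℝ ({E 4, E 5} : Set g)) :=
          Submodule.finrank_mono hle
      _ ≤ 2 := by
          refine (finrank_span_le_card _).trans ?_
          rw [Set.toFinset_insert, Set.toFinset_singleton]
          exact (Finset.card_insert_le _ _).trans (by simp)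
  refine ⟨⟨hlcs2, hne⟩, by omega, ?_, ?_, ?_⟩
  -- case h2
  · intro hgt
    rw [hident] at hgt
    have hd0 : (0 : ℝ) < 4*y^2 + 4*x*((ρ+lam)*(lam-ρ)) - ((ρ+lam)*(lam-ρ))^2 := by linarith
    have hs2 : (Real.sqrt (4*y^2 + 4*x*((ρ+lam)*(lam-ρ)) - ((ρ+lam)*(lam-ρ))^2))^2
        = 4*y^2 + 4*x*((ρ+lam)*(lam-ρ)) - ((ρ+lam)*(lam-ρ))^2 := Real.sq_sqrt hd0.le
    have hspos : 0 < Real.sqrt (4*y^2 + 4*x*((ρ+lam)*(lam-ρ)) - ((ρ+lam)*(lam-ρ))^2) := Real.sqrt_pos.mpr hd0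
    have hdt : ((-(2*y) + Real.sqrt (4*y^2 + 4*x*((ρ+lam)*(lam-ρ)) - ((ρ+lam)*(lam-ρ))^2))/((ρ+lam)*(lam-ρ))) - ((-(2*y) - Real.sqrt (4*y^2 + 4*x*((ρ+lam)*(lam-ρ)) - ((ρ+lam)*(lam-ρ))^2))/((ρ+lam)*(lam-ρ))) ≠ 0 := by
      rw [div_sub_div_same, show (-(2*y) + Real.sqrt (4*y^2 + 4*x*((ρ+lam)*(lam-ρ)) - ((ρ+lam)*(lam-ρ))^2) -
        (-(2*y) - Real.sqrt (4*y^2 + 4*x*((ρ+lam)*(lam-ρ)) - ((ρ+lam)*(lam-ρ))^2)))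
        = 2 * Real.sqrt (4*y^2 + 4*x*((ρ+lam)*(lam-ρ)) - ((ρ+lam)*(lam-ρ))^2) from by ring]
      exact div_ne_zero (by positivity) hP
    have e1 : (ρ+lam)*(lam-ρ)*(((-(2*y) + Real.sqrt (4*y^2 + 4*x*((ρ+lam)*(lam-ρ)) - ((ρ+lam)*(lam-ρ))^2))/((ρ+lam)*(lam-ρ))) + ((-(2*y) - Real.sqrt (4*y^2 + 4*x*((ρ+lam)*(lam-ρ)) - ((ρ+lam)*(lam-ρ))^2))/((ρ+lam)*(lam-ρ))))/2 = -(2*y) := by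
      field_simp
      try ring
    have e2 : (ρ+lam)*(lam-ρ)*(1 - ((-(2*y) + Real.sqrt (4*y^2 + 4*x*((ρ+lam)*(lam-ρ)) - ((ρ+lam)*(lam-ρ))^2))/((ρ+lam)*(lam-ρ))) * ((-(2*y) - Real.sqrt (4*y^2 + 4*x*((ρ+lam)*(lam-ρ)) - ((ρ+lam)*(lam-ρ))^2))/((ρ+lam)*(lam-ρ))))/2 = 2*x := by
      rw [div_mul_div_comm, show (-(2*y) + Real.sqrt (4*y^2 + 4*x*((ρ+lam)*(lam-ρ)) - ((ρ+lam)*(lam-ρ))^2)) *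
        (-(2*y) - Real.sqrt (4*y^2 + 4*x*((ρ+lam)*(lam-ρ)) - ((ρ+lam)*(lam-ρ))^2))
        = 4*y^2 - (Real.sqrt (4*y^2 + 4*x*((ρ+lam)*(lam-ρ)) - ((ρ+lam)*(lam-ρ))^2))^2 from by ring, hs2]
      field_simp
      try ring
    rw [← e1, ← e2] at T23
    exact mkH2 E (ρ+lam) (lam-ρ) ((-(2*y) + Real.sqrt (4*y^2 + 4*x*((ρ+lam)*(lam-ρ)) - ((ρ+lam)*(lam-ρ))^2))/((ρ+lam)*(lam-ρ))) ((-(2*y) - Real.sqrt (4*y^2 + 4*x*((ρ+lam)*(lam-ρ)) - ((ρ+lam)*(lam-ρ))^2))/((ρ+lam)*(lam-ρ))) hμ hν hdt T01 T02 T03 T12 T13 T23 Tc4 Tc5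
  -- case h4
  · intro heq
    rw [hident] at heq
    have e1 : (ρ+lam)*(lam-ρ)*((-(2*y))/((ρ+lam)*(lam-ρ))) = -(2*y) := by
      field_simp
      try ring
    have e2 : (ρ+lam)*(lam-ρ)*(1 - ((-(2*y))/((ρ+lam)*(lam-ρ)))^2)/2 = 2*x := by
      have h4y : 4*y^2 = ((ρ+lam)*(lam-ρ))^2 - 4*x*((ρ+lam)*(lam-ρ)) := heq
      field_simp
      linear_combination (-1 : ℝ) * h4y
    rw [show ((-(2*y) : ℝ)) = (ρ+lam)*(lam-ρ)*((-(2*y))/((ρ+lam)*(lam-ρ))) from e1.symm,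
      show (((2*x) : ℝ)) = (ρ+lam)*(lam-ρ)*(1 - ((-(2*y))/((ρ+lam)*(lam-ρ)))^2)/2 from e2.symm] at T23
    exact mkH4 E (ρ+lam) (lam-ρ) ((-(2*y))/((ρ+lam)*(lam-ρ))) hμ hν T01 T02 T03 T12 T13 T23 Tc4 Tc5
  -- case h5
  · intro hlt
    rw [hident] at hlt
    have hd0 : (0 : ℝ) < -(4*y^2 + 4*x*((ρ+lam)*(lam-ρ)) - ((ρ+lam)*(lam-ρ))^2) := by linarith
    have hs2 : (Real.sqrt (-(4*y^2 + 4*x*((ρ+lam)*(lam-ρ)) - ((ρ+lam)*(lam-ρ))^2)))^2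
        = -(4*y^2 + 4*x*((ρ+lam)*(lam-ρ)) - ((ρ+lam)*(lam-ρ))^2) := Real.sq_sqrt hd0.le
    have hspos : 0 < Real.sqrt (-(4*y^2 + 4*x*((ρ+lam)*(lam-ρ)) - ((ρ+lam)*(lam-ρ))^2)) := Real.sqrt_pos.mpr hd0
    have hq : ((Real.sqrt (-(4*y^2 + 4*x*((ρ+lam)*(lam-ρ)) - ((ρ+lam)*(lam-ρ))^2)))/((ρ+lam)*(lam-ρ))) ≠ 0 := div_ne_zero (by positivity) hP
    have e1 : (ρ+lam)*(lam-ρ)*((-(2*y))/((ρ+lam)*(lam-ρ))) = -(2*y) := by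
      field_simp
      try ring
    have e2 : (ρ+lam)*(lam-ρ)*(1 - ((-(2*y))/((ρ+lam)*(lam-ρ)))^2 - ((Real.sqrt (-(4*y^2 + 4*x*((ρ+lam)*(lam-ρ)) - ((ρ+lam)*(lam-ρ))^2)))/((ρ+lam)*(lam-ρ)))^2)/2 = 2*x := by
      rw [div_pow, div_pow, hs2]
      field_simp
      try ring
    rw [show ((-(2*y) : ℝ)) = (ρ+lam)*(lam-ρ)*((-(2*y))/((ρ+lam)*(lam-ρ))) from e1.symm,
      show (((2*x) : ℝ)) = (ρ+lam)*(lam-ρ)*(1 - ((-(2*y))/((ρ+lam)*(lam-ρ)))^2 - ((Real.sqrt (-(4*y^2 + 4*x*((ρ+lam)*(lam-ρ)) - ((ρ+lam)*(lam-ρ))^2)))/((ρ+lam)*(lam-ρ)))^2)/2 from e2.symm] at T23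
    exact mkH5 E (ρ+lam) (lam-ρ) ((-(2*y))/((ρ+lam)*(lam-ρ))) ((Real.sqrt (-(4*y^2 + 4*x*((ρ+lam)*(lam-ρ)) - ((ρ+lam)*(lam-ρ))^2)))/((ρ+lam)*(lam-ρ))) hμ hν hq T01 T02 T03 T12 T13 T23 Tc4 Tc5
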